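/- With q, Π, Q as above (q continuous strictly increasing, branch fixed by Q(a) ∈ e^{iπ/4}·ℝ₊ where a = q(-1)), for every t > 0 one has Re Q(a - it) > 0 and Re Q(b - it) < 0, where b = q(1). Consequently, for each fixed t > 0 the equation Re Q(c - it) = 0 has exactly one solution c ∈ (a, b). -/

import Mathlib

open Complex Set

/-- `Q(λ) = ∫_{-1}^1 √(i(q(x)-λ)) dx` with the branch fixed by `Q(q(-1)) ∈ e^{iπ/4}·ℝ₊`,
realized via the principal square root as `e^{iπ/4}·(q(x)-λ)^{1/2}`. -/
noncomputable def Qmodel (q : ℝ → ℝ) (lam : ℂ) : ℂ :=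
  ∫ x in (-1:ℝ)..1, Complex.exp ((Real.pi : ℂ) * Complex.I / 4) *
    ((q x : ℂ) - lam) ^ ((1:ℂ)/2)

/-- The real part of `e^{iπ/4}·(u+it)^{1/2}` as an explicit real function. -/
noncomputable def Gfun (t u : ℝ) : ℝ :=
  (Real.sqrt (Real.sqrt (u ^ 2 + t ^ 2) + u) - Real.sqrt (Real.sqrt (u ^ 2 + t ^ 2) - u)) / 2

lemma abs_lt_r {t u : ℝ} (ht : 0 < t) : |u| < Real.sqrt (u ^ 2 + t ^ 2) := by
  rw [← Real.sqrt_sq_eq_abs]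
  exact Real.sqrt_lt_sqrt (sq_nonneg u) (by nlinarith)

lemma Gfun_zero (t : ℝ) : Gfun t 0 = 0 := by simp [Gfun]

lemma Gfun_strictMono {t : ℝ} (ht : 0 < t) : StrictMono (Gfun t) := by
  intro u1 u2 h
  have h1 := abs_lt_r (t := t) (u := u1) ht
  have h2 := abs_lt_r (t := t) (u := u2) ht
  set r1 := Real.sqrt (u1 ^ 2 + t ^ 2) with hr1
  set r2 := Real.sqrt (u2 ^ 2 + t ^ 2) with hr2
  have hr1sq : r1 ^ 2 = u1 ^ 2 + t ^ 2 := Real.sq_sqrt (by positivity)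
  have hr2sq : r2 ^ 2 = u2 ^ 2 + t ^ 2 := Real.sq_sqrt (by positivity)
  have ha1 := abs_lt.1 h1
  have ha2 := abs_lt.1 h2
  have key1 : r1 + u1 < r2 + u2 := by
    nlinarith [mul_pos (sub_pos.2 h) (show (0:ℝ) < u1 + u2 + r1 + r2 by linarith)]
  have key2 : r2 - u2 < r1 - u1 := by
    nlinarith [mul_pos (sub_pos.2 h) (show (0:ℝ) < r1 + r2 - u1 - u2 by linarith)]
  have s1 : Real.sqrt (r1 + u1) < Real.sqrt (r2 + u2) :=
    Real.sqrt_lt_sqrt (by linarith) key1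
  have s2 : Real.sqrt (r2 - u2) < Real.sqrt (r1 - u1) :=
    Real.sqrt_lt_sqrt (by linarith) key2
  simp only [Gfun]
  linarith

lemma Gfun_pos {t u : ℝ} (ht : 0 < t) (hu : 0 < u) : 0 < Gfun t u := by
  have := Gfun_strictMono ht hu
  rwa [Gfun_zero] at this

lemma Gfun_neg {t u : ℝ} (ht : 0 < t) (hu : u < 0) : Gfun t u < 0 := by
  have := Gfun_strictMono ht hu
  rwa [Gfun_zero] at this

lemma Gfun_continuous (t : ℝ) : Continuous fun u => Gfun t u := by
  unfold Gfun; fun_prop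

/-- The key pointwise computation of the real part. -/
lemma re_formula {t : ℝ} (ht : 0 < t) (u : ℝ) :
    (Complex.exp ((Real.pi : ℂ) * Complex.I / 4) *
      (((u : ℂ) + Complex.I * t) ^ ((1:ℂ)/2))).re = Gfun t u := by
  set z : ℂ := (u : ℂ) + Complex.I * t with hz
  have hzre : z.re = u := by simp [hz]
  have hzim : z.im = t := by simp [hz]
  have habs : ‖z‖ = Real.sqrt (u ^ 2 + t ^ 2) := by
    rw [Complex.norm_def, Complex.normSq_apply, hzre, hzim]; ring_nf
  have hhalf : ((1:ℂ)/2) = (2⁻¹ : ℂ) := by norm_num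
  have hexp : (Real.pi : ℂ) * Complex.I / 4 = ((Real.pi / 4 : ℝ) : ℂ) * Complex.I := by
    push_cast; ring
  rw [hhalf, Complex.mul_re, hexp, Complex.exp_ofReal_mul_I_re, Complex.exp_ofReal_mul_I_im,
    Complex.cpow_inv_two_re, Complex.cpow_inv_two_im_eq_sqrt (by rw [hzim]; exact ht.le),
    habs, hzre, Real.cos_pi_div_four, Real.sin_pi_div_four]
  set r := Real.sqrt (u ^ 2 + t ^ 2) with hr
  have hrabs : |u| < r := abs_lt_r ht
  have hau := abs_lt.1 hrabs
  have h2 : Real.sqrt 2 * Real.sqrt 2 = 2 := Real.mul_self_sqrt (by norm_num)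
  have h2pos : (0:ℝ) < Real.sqrt 2 := Real.sqrt_pos.2 (by norm_num)
  rw [Real.sqrt_div (by linarith : (0:ℝ) ≤ r + u) 2, Real.sqrt_div (by linarith : (0:ℝ) ≤ r - u) 2]
  unfold Gfun
  rw [← hr]
  field_simp

lemma base_eq (v c t : ℝ) :
    ((v : ℂ) - ((c : ℂ) - Complex.I * t)) = ((v - c : ℝ) : ℂ) + Complex.I * t := by
  push_cast; ring

/-- `Re Q(c - it)` as a real integral. -/
lemma Qmodel_re_eq (q : ℝ → ℝ) (hq : ContinuousOn q (Icc (-1) 1)) {t : ℝ} (ht : 0 < t)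
    (c : ℝ) :
    (Qmodel q ((c : ℂ) - Complex.I * t)).re = ∫ x in (-1:ℝ)..1, Gfun t (q x - c) := by
  set lam : ℂ := (c : ℂ) - Complex.I * t with hlam
  set F : ℝ → ℂ := fun x => Complex.exp ((Real.pi : ℂ) * Complex.I / 4) *
      ((q x : ℂ) - lam) ^ ((1:ℂ)/2) with hF
  have huIcc : uIcc (-1:ℝ) 1 = Icc (-1) 1 := uIcc_of_le (by norm_num)
  have hbase : ContinuousOn (fun x => ((q x : ℂ) - lam)) (Icc (-1) 1) :=
    (Complex.continuous_ofReal.comp_continuousOn hq).sub continuousOn_const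
  have hpow : ContinuousOn (fun x => ((q x : ℂ) - lam) ^ ((1:ℂ)/2)) (Icc (-1) 1) := by
    intro x hx
    refine (continuousAt_cpow_const ?_).comp_continuousWithinAt (hbase x hx)
    refine Complex.mem_slitPlane_iff.2 (Or.inr ?_)
    have : ((q x : ℂ) - lam).im = t := by simp [hlam]
    rw [this]; exact ht.ne'
  have hFcont : ContinuousOn F (Icc (-1) 1) := continuousOn_const.mul hpow
  have hInt : IntervalIntegrable F MeasureTheory.volume (-1) 1 :=
    (huIcc ▸ hFcont).intervalIntegrable
  have h1 : (∫ x in (-1:ℝ)..1, Complex.reCLM (F x)) = Complex.reCLM (∫ x in (-1:ℝ)..1, F x) :=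
    Complex.reCLM.intervalIntegral_comp_comm hInt
  have h2 : (Qmodel q lam).re = ∫ x in (-1:ℝ)..1, (F x).re := by
    rw [Qmodel, ← hF]
    exact_mod_cast h1.symm
  rw [h2]
  congr 1
  funext x
  rw [hF]
  simp only
  rw [base_eq (q x) c t]
  exact re_formula ht (q x - c)

/-- For every `t > 0`, `Re Q(a-it) > 0` and `Re Q(b-it) < 0` where `a = q(-1)`, `b = q(1)`;
consequently for each fixed `t > 0` the equation `Re Q(c-it) = 0` has exactly one solution
`c ∈ (a,b)`. -/
theorem stmt_8 (q : ℝ → ℝ) (hq : ContinuousOn q (Icc (-1) 1))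
    (hmono : StrictMonoOn q (Icc (-1) 1)) :
    ∀ t : ℝ, 0 < t →
      0 < (Qmodel q ((q (-1) : ℂ) - Complex.I * t)).re ∧
      (Qmodel q ((q 1 : ℂ) - Complex.I * t)).re < 0 ∧
      ∃! c : ℝ, c ∈ Ioo (q (-1)) (q 1) ∧
        (Qmodel q ((c : ℂ) - Complex.I * t)).re = 0 := by
  intro t ht
  have hm1 : (-1:ℝ) ∈ Icc (-1:ℝ) 1 := left_mem_Icc.2 (by norm_num)
  have hp1 : (1:ℝ) ∈ Icc (-1:ℝ) 1 := right_mem_Icc.2 (by norm_num)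
  have hab : q (-1) < q 1 := hmono hm1 hp1 (by norm_num)
  set f : ℝ → ℝ := fun c => ∫ x in (-1:ℝ)..1, Gfun t (q x - c) with hf
  have hfe : ∀ c : ℝ, (Qmodel q ((c : ℂ) - Complex.I * t)).re = f c :=
    fun c => Qmodel_re_eq q hq ht c
  -- continuity of the integrand in x, for fixed c
  have hgc : ∀ c : ℝ, ContinuousOn (fun x => Gfun t (q x - c)) (Icc (-1) 1) :=
    fun c => (Gfun_continuous t).comp_continuousOn (hq.sub continuousOn_const)
  -- f (q (-1)) > 0
  have hfa : 0 < f (q (-1)) := by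
    have h0 : (∫ x in (-1:ℝ)..1, (0:ℝ)) < ∫ x in (-1:ℝ)..1, Gfun t (q x - q (-1)) := by
      apply intervalIntegral.integral_lt_integral_of_continuousOn_of_le_of_exists_lt
        (by norm_num) continuousOn_const (hgc _)
      · intro x hx
        have hx' : x ∈ Icc (-1:ℝ) 1 := ⟨hx.1.le, hx.2⟩
        have : q (-1) < q x := hmono hm1 hx' hx.1
        exact (Gfun_pos ht (by linarith)).le
      · exact ⟨1, hp1, Gfun_pos ht (by linarith)⟩
    simpa using h0
  -- f (q 1) < 0
  have hfb : f (q 1) < 0 := by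
    have h0 : (∫ x in (-1:ℝ)..1, Gfun t (q x - q 1)) < ∫ x in (-1:ℝ)..1, (0:ℝ) := by
      apply intervalIntegral.integral_lt_integral_of_continuousOn_of_le_of_exists_lt
        (by norm_num) (hgc _) continuousOn_const
      · intro x hx
        have hx' : x ∈ Icc (-1:ℝ) 1 := ⟨hx.1.le, hx.2⟩
        have : q x ≤ q 1 := hmono.monotoneOn hx' hp1 hx.2
        rcases lt_or_eq_of_le this with h | h
        · exact (Gfun_neg ht (by linarith)).le
        · simp [h, Gfun_zero]
      · exact ⟨-1, hm1, Gfun_neg ht (by linarith)⟩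
    simpa using h0
  -- f is strictly antitone
  have hanti : StrictAnti f := by
    intro c1 c2 hc
    apply intervalIntegral.integral_lt_integral_of_continuousOn_of_le_of_exists_lt
      (by norm_num) (hgc _) (hgc _)
    · intro x _
      exact (Gfun_strictMono ht (by linarith : q x - c2 < q x - c1)).le
    · exact ⟨1, hp1, Gfun_strictMono ht (by linarith : q 1 - c2 < q 1 - c1)⟩
  -- f is continuous
  have hcont : Continuous f := by
    set qt : ℝ → ℝ := fun x => q (max (-1) (min 1 x)) with hqt
    have hqtc : Continuous qt := by
      apply hq.comp_continuous (by fun_prop)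
      intro x
      constructor
      · exact le_max_left _ _
      · exact max_le (by norm_num) (min_le_left _ _)
    have hqteq : ∀ x ∈ Icc (-1:ℝ) 1, qt x = q x := by
      intro x hx
      have : max (-1) (min 1 x) = x := by
        rw [min_eq_right hx.2, max_eq_right hx.1]
      rw [hqt]; simp only [this]
    have hfeq : f = fun c => ∫ x in (-1:ℝ)..1, Gfun t (qt x - c) := by
      funext c
      apply intervalIntegral.integral_congr
      intro x hx
      rw [uIcc_of_le (by norm_num : (-1:ℝ) ≤ 1)] at hx
      simp only [hqteq x hx]
    rw [hfeq]
    exact intervalIntegral.continuous_parametric_intervalIntegral_of_continuous'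
      (f := fun c x => Gfun t (qt x - c))
      (by apply (Gfun_continuous t).comp; fun_prop) (-1) 1
  -- existence of a zero via IVT
  have hivt : (0:ℝ) ∈ f '' Ioo (q (-1)) (q 1) := by
    apply intermediate_value_Ioo' hab.le hcont.continuousOn
    exact ⟨hfb, hfa⟩
  obtain ⟨c, hcmem, hc0⟩ := hivt
  refine ⟨by rw [hfe]; exact hfa, by rw [hfe]; exact hfb, ⟨c, ⟨hcmem, by rw [hfe]; exact hc0⟩, ?_⟩⟩
  rintro c' ⟨hc'mem, hc'0⟩
  rw [hfe] at hc'0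
  by_contra hne
  rcases lt_or_gt_of_ne hne with h | h
  · have := hanti h; rw [hc0, hc'0] at this; exact lt_irrefl _ this
  · have := hanti h; rw [hc0, hc'0] at this; exact lt_irrefl _ this
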